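/- arXiv:1604.06144 — 5 statements merged into one kernel-verified Lean document; each statement's English description precedes it below -/
import Mathlib

section
/- Let h, g : ℝ_+ → ℝ be strictly monotone functions. For every y ∈ ℝ_+^N with ∑ y_i = L, the cyclic sum ∑_{i=1}^N h(y_i)(g(y_{i+1}) − g(y_i)) (indices mod N) is nonnegative if one of h, g is strictly increasing and the other strictly decreasing, and nonpositive if h and g are both strictly increasing or both strictly decreasing. Moreover the sum equals zero if and only if y_i = L/N for all i. -/
open Finset Set

/-- Chain sum of `h a * (g b - g a)` over consecutive pairs of a list. -/
def chainS (h g : ℝ → ℝ) : List ℝ → ℝ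
  | a :: b :: t => h a * (g b - g a) + chainS h g (b :: t)
  | _ => 0

/-- Last element with default. -/
def lastd : List ℝ → ℝ → ℝ
  | [], d => d
  | a :: t, _ => lastd t a

/-- Cyclic sum. -/
def cycS (h g : ℝ → ℝ) : List ℝ → ℝ
  | [] => 0
  | a :: t => chainS h g (a :: (t ++ [a]))

lemma lastd_append (t : List ℝ) (x d : ℝ) : lastd (t ++ [x]) d = x := by
  induction t generalizing d with
  | nil => rfl
  | cons a t ih => simpa [lastd] using ih a

lemma lastd_mem (t : List ℝ) (d : ℝ) : lastd t d ∈ d :: t := by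
  induction t generalizing d with
  | nil => simp [lastd]
  | cons a t ih =>
    have := ih a
    simp only [lastd, List.mem_cons] at this ⊢
    tauto

lemma chainS_concat (h g : ℝ → ℝ) :
    ∀ (t : List ℝ) (a x : ℝ),
      chainS h g (a :: (t ++ [x]))
        = chainS h g (a :: t) + h (lastd t a) * (g x - g (lastd t a)) := by
  intro t
  induction t with
  | nil => intro a x; simp [chainS, lastd]
  | cons b t ih =>
    intro a x
    simp only [List.cons_append, chainS, lastd, List.append_eq]
    rw [ih b x]
    ring

lemma cycS_rot (h g : ℝ → ℝ) (a : ℝ) (xs : List ℝ) :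
    cycS h g (a :: xs) = cycS h g (xs ++ [a]) := by
  cases xs with
  | nil => simp [cycS]
  | cons b t =>
    show chainS h g (a :: ((b :: t) ++ [a])) = cycS h g (b :: (t ++ [a]))
    rw [chainS_concat h g (b :: t) a a]
    show _ = chainS h g (b :: ((t ++ [a]) ++ [b]))
    rw [chainS_concat h g (t ++ [a]) b b, chainS_concat h g t b a, lastd_append]
    simp only [chainS, lastd]
    ring

lemma cycS_rotate (h g : ℝ → ℝ) (xs ys : List ℝ) :
    cycS h g (xs ++ ys) = cycS h g (ys ++ xs) := by
  induction xs generalizing ys with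
  | nil => simp
  | cons a xs ih =>
    have h1 : cycS h g (a :: (xs ++ ys)) = cycS h g ((xs ++ ys) ++ [a]) :=
      cycS_rot h g a (xs ++ ys)
    have h2 : cycS h g (xs ++ (ys ++ [a])) = cycS h g ((ys ++ [a]) ++ xs) := ih (ys ++ [a])
    calc cycS h g ((a :: xs) ++ ys) = cycS h g (a :: (xs ++ ys)) := by simp
    _ = cycS h g (xs ++ (ys ++ [a])) := by rw [h1, List.append_assoc]
    _ = cycS h g ((ys ++ [a]) ++ xs) := h2
    _ = cycS h g (ys ++ (a :: xs)) := by simp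

lemma cycS_removal (h g : ℝ → ℝ) (m r : ℝ) (t : List ℝ) :
    cycS h g (m :: r :: t)
      = cycS h g (r :: t) + (h m - h (lastd t r)) * (g r - g m) := by
  show chainS h g (m :: ((r :: t) ++ [m])) = chainS h g (r :: (t ++ [r])) + _
  rw [chainS_concat h g (r :: t) m m, chainS_concat h g t r r]
  simp only [chainS, lastd]
  ring

lemma exists_max (x : ℝ) (t : List ℝ) : ∃ m ∈ x :: t, ∀ a ∈ x :: t, a ≤ m := by
  induction t generalizing x with
  | nil => exact ⟨x, by simp, by simp⟩
  | cons b t ih =>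
    obtain ⟨m, hm, hmax⟩ := ih b
    rcases le_total x m with hx | hx
    · refine ⟨m, by simp [List.mem_cons] at hm ⊢; tauto, ?_⟩
      intro a ha
      rcases List.mem_cons.1 ha with rfl | ha
      · exact hx
      · exact hmax a ha
    · refine ⟨x, by simp, ?_⟩
      intro a ha
      rcases List.mem_cons.1 ha with rfl | ha
      · exact le_rfl
      · exact (hmax a ha).trans hx

lemma main_list (h g : ℝ → ℝ) (hh : StrictMonoOn h (Ici (0:ℝ)))
    (hg : StrictMonoOn g (Ici (0:ℝ))) :
    ∀ (n : ℕ) (l : List ℝ), l.length = n → (∀ x ∈ l, 0 ≤ x) →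
      cycS h g l ≤ 0 ∧ (cycS h g l = 0 → ∀ a ∈ l, ∀ b ∈ l, a = b) := by
  intro n
  induction n using Nat.strong_induction_on with
  | _ n ih =>
    intro l hlen hpos
    match l, hlen with
    | [], _ => simp [cycS]
    | x :: l', hlen =>
      obtain ⟨m, hm_mem, hmax⟩ := exists_max x l'
      obtain ⟨xs, ys, hdecomp⟩ := List.append_of_mem hm_mem
      have hrot : cycS h g (x :: l') = cycS h g (m :: (ys ++ xs)) := by
        rw [hdecomp, cycS_rotate h g xs (m :: ys)]
        simp
      have hmem_iff : ∀ a, a ∈ x :: l' ↔ (a = m ∨ a ∈ ys ++ xs) := by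
        intro a
        rw [hdecomp]
        simp [List.mem_append, List.mem_cons]
        tauto
      cases hrest : ys ++ xs with
      | nil =>
        rw [hrot, hrest]
        constructor
        · simp [cycS, chainS]
        · intro _ a ha b hb
          have ha' := (hmem_iff a).1 ha
          have hb' := (hmem_iff b).1 hb
          rw [hrest] at ha' hb'
          simp at ha' hb'
          rw [ha', hb']
      | cons r t =>
        rw [hrot, hrest]
        set lam := lastd t r with hlam
        have hremoval := cycS_removal h g m r t
        -- memberships
        have hrt_sub : ∀ a ∈ r :: t, a ∈ x :: l' := by
          intro a ha
          exact (hmem_iff a).2 (Or.inr (hrest ▸ ha))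
        have hm_in : m ∈ x :: l' := hm_mem
        have hr_in : r ∈ x :: l' := hrt_sub r (by simp)
        have hlam_rt : lam ∈ r :: t := lastd_mem t r
        have hlam_in : lam ∈ x :: l' := hrt_sub lam hlam_rt
        have h0m : (0:ℝ) ≤ m := hpos m hm_in
        have h0r : (0:ℝ) ≤ r := hpos r hr_in
        have h0lam : (0:ℝ) ≤ lam := hpos lam hlam_in
        have hrm : r ≤ m := hmax r hr_in
        have hlamm : lam ≤ m := hmax lam hlam_in
        have hhle : h lam ≤ h m := hh.monotoneOn h0lam h0m hlamm
        have hgle : g r ≤ g m := hg.monotoneOn h0r h0m hrm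
        have hprod : (h m - h lam) * (g r - g m) ≤ 0 := by nlinarith
        -- induction hypothesis on r :: t
        have hlen' : (r :: t).length < n := by
          have hthis : (x :: l').length = n := hlen
          have h2 : (x :: l').length = (ys ++ xs).length + 1 := by
            rw [hdecomp]; simp [List.length_append]; omega
          rw [hrest] at h2
          simp only [List.length_cons] at h2 hthis ⊢
          omega
        obtain ⟨hle', heq'⟩ := ih (r :: t).length hlen' (r :: t) rfl
          (fun a ha => hpos a (hrt_sub a ha))
        constructor
        · rw [hremoval]; linarith
        · intro hzero
          rw [hremoval] at hzero
          have hrest0 : cycS h g (r :: t) = 0 := by linarith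
          have hprod0 : (h m - h lam) * (g r - g m) = 0 := by linarith
          have hconst := heq' hrest0
          have hmr : m = r := by
            rcases mul_eq_zero.1 hprod0 with he | he
            · have : h m = h lam := by linarith
              have : m = lam := hh.injOn h0m h0lam this
              rw [this]
              exact hconst lam hlam_rt r (by simp)
            · have : g r = g m := by linarith
              exact (hg.injOn h0r h0m this).symm
          intro a ha b hb
          have key : ∀ c, c ∈ x :: l' → c = m := by
            intro c hc
            rcases (hmem_iff c).1 hc with rfl | hc'
            · rfl
            · rw [hrest] at hc'
              have := hconst c hc' r (by simp)
              rw [this, ← hmr]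
          rw [key a ha, key b hb]

lemma chainS_ofFn (h g : ℝ → ℝ) :
    ∀ (n : ℕ) (f : Fin (n+1) → ℝ),
      chainS h g (List.ofFn f)
        = ∑ i : Fin n, h (f i.castSucc) * (g (f i.succ) - g (f i.castSucc)) := by
  intro n
  induction n with
  | zero => intro f; simp [List.ofFn_succ, chainS]
  | succ n ih =>
    intro f
    rw [List.ofFn_succ (f := f)]
    rw [show List.ofFn (fun i : Fin (n+1) => f i.succ)
        = (fun i : Fin (n+1) => f i.succ) 0 :: List.ofFn (fun i : Fin n => f i.succ.succ)
      from List.ofFn_succ]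
    show h (f 0) * (g (f (0:Fin (n+1)).succ) - g (f 0)) + chainS h g _ = _
    rw [← List.ofFn_succ (f := fun i : Fin (n+1) => f i.succ), ih (fun i => f i.succ)]
    rw [Fin.sum_univ_succ]
    simp only [Fin.castSucc_zero, Fin.succ_castSucc]


lemma lastd_ofFn (h g : ℝ → ℝ) :
    ∀ (n : ℕ) (f : Fin (n+1) → ℝ) (d : ℝ),
      lastd (List.ofFn f) d = f (Fin.last n) := by
  intro n
  induction n with
  | zero => intro f d; simp [List.ofFn_succ, lastd]
  | succ n ih =>
    intro f d
    rw [List.ofFn_succ (f := f)]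
    show lastd (List.ofFn fun i : Fin (n+1) => f i.succ) (f 0) = _
    rw [ih (fun i => f i.succ) (f 0)]
    rw [← Fin.succ_last]

lemma cycS_ofFn (h g : ℝ → ℝ) (n : ℕ) (y : Fin (n+1) → ℝ) :
    cycS h g (List.ofFn y) = ∑ i : Fin (n+1), h (y i) * (g (y (i+1)) - g (y i)) := by
  have hofn : List.ofFn y = y 0 :: List.ofFn (fun i : Fin n => y i.succ) := List.ofFn_succ (f := y)
  have hlam : lastd (List.ofFn fun i : Fin n => y i.succ) (y 0) = y (Fin.last n) := by
    cases n with
    | zero => simp [lastd]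
    | succ m =>
      rw [lastd_ofFn h g m (fun i => y i.succ) (y 0), ← Fin.succ_last]
  rw [hofn]
  show chainS h g (y 0 :: ((List.ofFn fun i : Fin n => y i.succ) ++ [y 0])) = _
  rw [chainS_concat h g _ (y 0) (y 0), hlam, ← hofn, chainS_ofFn h g n y]
  rw [Fin.sum_univ_castSucc (f := fun i : Fin (n+1) => h (y i) * (g (y (i+1)) - g (y i)))]
  have e2 : Fin.last n + 1 = (0 : Fin (n+1)) := Fin.last_add_one n
  simp only [Fin.coeSucc_eq_succ, e2]

lemma master (n : ℕ) (h g : ℝ → ℝ) (hh : StrictMonoOn h (Ici (0:ℝ)))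
    (hg : StrictMonoOn g (Ici (0:ℝ))) (y : Fin (n+1) → ℝ) (hy : ∀ i, 0 ≤ y i) :
    (∑ i, h (y i) * (g (y (i+1)) - g (y i)) ≤ 0) ∧
      ((∑ i, h (y i) * (g (y (i+1)) - g (y i))) = 0 → ∀ i j, y i = y j) := by
  have hb := cycS_ofFn h g n y
  obtain ⟨h1, h2⟩ := main_list h g hh hg (List.ofFn y).length (List.ofFn y) rfl
    (by intro x hx; obtain ⟨i, rfl⟩ := List.mem_ofFn.1 hx; exact hy i)
  constructor
  · rw [← hb]; exact h1
  · intro h0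
    have := h2 (by rw [hb]; exact h0)
    intro i j
    exact this (y i) (List.mem_ofFn.2 ⟨i, rfl⟩) (y j) (List.mem_ofFn.2 ⟨j, rfl⟩)

theorem stmt_4 (N : ℕ) [NeZero N] (L : ℝ) (hL : 0 < L)
    (h g : ℝ → ℝ)
    (y : Fin N → ℝ) (hy : ∀ i, 0 ≤ y i) (hsum : ∑ i, y i = L)
    (hmono : StrictMonoOn h (Ici (0 : ℝ)) ∨ StrictAntiOn h (Ici (0 : ℝ)))
    (gmono : StrictMonoOn g (Ici (0 : ℝ)) ∨ StrictAntiOn g (Ici (0 : ℝ))) :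
    (((StrictMonoOn h (Ici (0 : ℝ)) ∧ StrictAntiOn g (Ici (0 : ℝ))) ∨
      (StrictAntiOn h (Ici (0 : ℝ)) ∧ StrictMonoOn g (Ici (0 : ℝ)))) →
        0 ≤ ∑ i, h (y i) * (g (y (i + 1)) - g (y i))) ∧
    (((StrictMonoOn h (Ici (0 : ℝ)) ∧ StrictMonoOn g (Ici (0 : ℝ))) ∨
      (StrictAntiOn h (Ici (0 : ℝ)) ∧ StrictAntiOn g (Ici (0 : ℝ)))) →
        ∑ i, h (y i) * (g (y (i + 1)) - g (y i)) ≤ 0) ∧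
    ((∑ i, h (y i) * (g (y (i + 1)) - g (y i)) = 0) ↔ ∀ i, y i = L / N) := by
  obtain ⟨n, rfl⟩ : ∃ n, N = n + 1 :=
    ⟨N - 1, (Nat.succ_pred_eq_of_pos (Nat.pos_of_ne_zero (NeZero.ne N))).symm⟩
  set S := ∑ i, h (y i) * (g (y (i + 1)) - g (y i)) with hS
  -- sign-flip identities
  have flip_h : ∀ (h' g' : ℝ → ℝ),
      (∑ i, (fun x => -h' x) (y i) * (g' (y (i+1)) - g' (y i)))
        = -(∑ i, h' (y i) * (g' (y (i+1)) - g' (y i))) := by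
    intro h' g'
    rw [← Finset.sum_neg_distrib]
    exact Finset.sum_congr rfl (fun i _ => by ring)
  have flip_g : ∀ (h' g' : ℝ → ℝ),
      (∑ i, h' (y i) * ((fun x => -g' x) (y (i+1)) - (fun x => -g' x) (y i)))
        = -(∑ i, h' (y i) * (g' (y (i+1)) - g' (y i))) := by
    intro h' g'
    rw [← Finset.sum_neg_distrib]
    exact Finset.sum_congr rfl (fun i _ => by ring)
  have neg_anti : ∀ f : ℝ → ℝ, StrictAntiOn f (Ici (0:ℝ)) →
      StrictMonoOn (fun x => -f x) (Ici (0:ℝ)) := by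
    intro f hf a ha b hb hab
    simpa using hf ha hb hab
  -- main case analysis helper: S ≤ 0 and eq→const in aligned cases etc.
  have key : (S ≤ 0 ∧ (S = 0 → ∀ i j, y i = y j)) ∨
      (0 ≤ S ∧ (S = 0 → ∀ i j, y i = y j)) := by
    rcases hmono with hh | hh <;> rcases gmono with hg | hg
    · left
      exact master n h g hh hg y hy
    · right
      obtain ⟨h1, h2⟩ := master n h (fun x => -g x) hh (neg_anti g hg) y hy
      rw [flip_g h g] at h1 h2
      exact ⟨by linarith, fun h0 => h2 (by rw [← hS] at *; linarith)⟩
    · right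
      obtain ⟨h1, h2⟩ := master n (fun x => -h x) g (neg_anti h hh) hg y hy
      rw [flip_h h g] at h1 h2
      exact ⟨by linarith, fun h0 => h2 (by rw [← hS] at *; linarith)⟩
    · left
      obtain ⟨h1, h2⟩ := master n (fun x => -h x) (fun x => -g x)
        (neg_anti h hh) (neg_anti g hg) y hy
      rw [flip_h h (fun x => -g x), flip_g h g] at h1 h2
      simp only [neg_neg] at h1 h2
      exact ⟨h1, h2⟩
  have hconst : S = 0 → ∀ i, y i = L / (n+1 : ℕ) := by
    intro h0 i
    have hc : ∀ i j, y i = y j := by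
      rcases key with ⟨_, hk⟩ | ⟨_, hk⟩ <;> exact hk h0
    have hsum' : ∑ j : Fin (n+1), y i = L := by
      rw [← hsum]; exact Finset.sum_congr rfl (fun j _ => hc i j)
    rw [Finset.sum_const, Finset.card_univ, Fintype.card_fin, nsmul_eq_mul] at hsum'
    have hmul : ((n:ℝ)+1) * y i = L := by push_cast at hsum'; linarith
    have hne : ((n:ℝ)+1) ≠ 0 := by positivity
    push_cast
    rw [eq_div_iff hne]
    linarith
  have hzero_of : (∀ i, y i = L / (n+1 : ℕ)) → S = 0 := by
    intro hid
    rw [hS]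
    apply Finset.sum_eq_zero
    intro i _
    rw [hid i, hid (i+1)]
    ring
  refine ⟨?_, ?_, ?_⟩
  · rintro (⟨hh, hg⟩ | ⟨hh, hg⟩)
    · obtain ⟨h1, _⟩ := master n h (fun x => -g x) hh (neg_anti g hg) y hy
      rw [flip_g h g] at h1
      linarith
    · obtain ⟨h1, _⟩ := master n (fun x => -h x) g (neg_anti h hh) hg y hy
      rw [flip_h h g] at h1
      linarith
  · rintro (⟨hh, hg⟩ | ⟨hh, hg⟩)
    · exact (master n h g hh hg y hy).1
    · obtain ⟨h1, _⟩ := master n (fun x => -h x) (fun x => -g x)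
        (neg_anti h hh) (neg_anti g hg) y hy
      rw [flip_h h (fun x => -g x), flip_g h g] at h1
      simp only [neg_neg] at h1
      exact h1
  · exact ⟨hconst, hzero_of⟩
end

section
/- For y ∈ ℝ_{++}^N and m > 0, define f(y,m) = m ∑_{i=1}^N y_i^{m-1}(y_{i+1}^m − y_i^m) with indices mod N. Then f(y,m) ≤ 0 when m > 1 and f(y,m) ≥ 0 when m ∈ (0,1), with equality in each case if and only if all y_i are equal. -/
open Finset

lemma amgm2 (w₁ w₂ a b : ℝ) (h1 : 0 < w₁) (h2 : 0 < w₂) (hw : w₁ + w₂ = 1) :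
    Real.exp (w₁ * a + w₂ * b) ≤ w₁ * Real.exp a + w₂ * Real.exp b ∧
    (a ≠ b → Real.exp (w₁ * a + w₂ * b) < w₁ * Real.exp a + w₂ * Real.exp b) := by
  set c := w₁ * a + w₂ * b with hc
  have expa : Real.exp a = Real.exp c * Real.exp (a - c) := by
    rw [← Real.exp_add]; congr 1; ring
  have expb : Real.exp b = Real.exp c * Real.exp (b - c) := by
    rw [← Real.exp_add]; congr 1; ring
  have ha := Real.add_one_le_exp (a - c)
  have hb := Real.add_one_le_exp (b - c)
  have hpc := Real.exp_pos c
  have hz : w₁ * (a - c) + w₂ * (b - c) = 0 := by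
    rw [hc]; linear_combination (-(w₁*a + w₂*b)) * hw
  have key : 1 ≤ w₁ * Real.exp (a - c) + w₂ * Real.exp (b - c) := by
    nlinarith [mul_le_mul_of_nonneg_left ha h1.le, mul_le_mul_of_nonneg_left hb h2.le]
  constructor
  · rw [expa, expb]
    nlinarith [mul_le_mul_of_nonneg_left key hpc.le]
  · intro hab
    have hac : a - c ≠ 0 := by
      have : a - c = w₂ * (a - b) := by rw [hc]; linear_combination (-a) * hw
      rw [this]
      exact mul_ne_zero h2.ne' (sub_ne_zero.mpr hab)
    have ha' := Real.add_one_lt_exp hac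
    have key' : 1 < w₁ * Real.exp (a - c) + w₂ * Real.exp (b - c) := by
      nlinarith [mul_lt_mul_of_pos_left ha' h1, mul_le_mul_of_nonneg_left hb h2.le]
    rw [expa, expb]
    nlinarith [mul_lt_mul_of_pos_left key' hpc]

lemma ramgm2 (w₁ w₂ a b : ℝ) (h1 : w₁ < 0) (hw : w₁ + w₂ = 1) :
    w₁ * Real.exp a + w₂ * Real.exp b ≤ Real.exp (w₁ * a + w₂ * b) ∧
    (a ≠ b → w₁ * Real.exp a + w₂ * Real.exp b < Real.exp (w₁ * a + w₂ * b)) := by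
  have h2 : 0 < w₂ := by linarith
  have hlam1 : 0 < 1 / w₂ := by positivity
  have hlam2 : 0 < -w₁ / w₂ := div_pos (by linarith) h2
  have hlsum : 1 / w₂ + -w₁ / w₂ = 1 := by field_simp; linarith
  obtain ⟨hle, hlt⟩ := amgm2 (1/w₂) (-w₁/w₂) (w₁ * a + w₂ * b) a hlam1 hlam2 hlsum
  have harg : (1/w₂) * (w₁ * a + w₂ * b) + (-w₁/w₂) * a = b := by field_simp; ring
  rw [harg] at hle hlt
  constructor
  · have := mul_le_mul_of_nonneg_left hle h2.le
    have e : w₂ * ((1/w₂) * Real.exp (w₁*a+w₂*b) + (-w₁/w₂) * Real.exp a)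
        = Real.exp (w₁*a+w₂*b) - w₁ * Real.exp a := by field_simp; ring
    linarith [e ▸ this]
  · intro hab
    have hca : w₁ * a + w₂ * b ≠ a := by
      have : w₁ * a + w₂ * b - a = w₂ * (b - a) := by linear_combination a * hw
      intro h
      have : w₂ * (b - a) = 0 := by rw [← this, h]; ring
      rcases mul_eq_zero.mp this with h' | h'
      · exact h2.ne' h'
      · exact hab (by linarith [sub_eq_zero.mp h'])
    have := mul_lt_mul_of_pos_left (hlt hca) h2
    have e : w₂ * ((1/w₂) * Real.exp (w₁*a+w₂*b) + (-w₁/w₂) * Real.exp a)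
        = Real.exp (w₁*a+w₂*b) - w₁ * Real.exp a := by field_simp; ring
    linarith [e ▸ this]

section Term
variable (m u v : ℝ)

-- shared exp-form facts
lemma exp_facts (hu : 0 < u) (hv : 0 < v) (hs : 2*m - 1 ≠ 0) :
    u ^ (2*m-1) = Real.exp (Real.log u * (2*m-1)) ∧
    v ^ (2*m-1) = Real.exp (Real.log v * (2*m-1)) ∧
    u ^ (m-1) * (v ^ m - u ^ m) =
      Real.exp ((m-1)/(2*m-1) * (Real.log u * (2*m-1)) + m/(2*m-1) * (Real.log v * (2*m-1)))
      - Real.exp (Real.log u * (2*m-1)) := by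
  refine ⟨Real.rpow_def_of_pos hu _, Real.rpow_def_of_pos hv _, ?_⟩
  have e1 : (m-1)/(2*m-1) * (Real.log u * (2*m-1)) + m/(2*m-1) * (Real.log v * (2*m-1))
      = Real.log u * (m-1) + Real.log v * m := by
    rw [div_mul_eq_mul_div, div_mul_eq_mul_div, ← add_div, div_eq_iff hs]; ring
  rw [e1, Real.exp_add, ← Real.rpow_def_of_pos hu, ← Real.rpow_def_of_pos hv,
    ← Real.rpow_def_of_pos hu, mul_sub, ← Real.rpow_add hu]
  ring_nf

lemma log_ne (hu : 0 < u) (hv : 0 < v) (hs : 2*m - 1 ≠ 0) (hne : u ≠ v) :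
    Real.log u * (2*m-1) ≠ Real.log v * (2*m-1) := by
  intro h
  have : Real.log u = Real.log v := mul_right_cancel₀ hs h
  exact hne (by rw [← Real.exp_log hu, this, Real.exp_log hv])

lemma termA (hm : 1 < m) (hu : 0 < u) (hv : 0 < v) :
    u ^ (m-1) * (v ^ m - u ^ m) ≤ m/(2*m-1) * v ^ (2*m-1) - m/(2*m-1) * u ^ (2*m-1) ∧
    (u ≠ v → u ^ (m-1) * (v ^ m - u ^ m) < m/(2*m-1) * v ^ (2*m-1) - m/(2*m-1) * u ^ (2*m-1)) := by
  have hs : (0:ℝ) < 2*m - 1 := by linarith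
  have hs' : (2*m - 1 : ℝ) ≠ 0 := ne_of_gt hs
  obtain ⟨eu, ev, et⟩ := exp_facts m u v hu hv hs'
  have h1 : 0 < (m-1)/(2*m-1) := div_pos (by linarith) hs
  have h2 : 0 < m/(2*m-1) := div_pos (by linarith) hs
  have hw : (m-1)/(2*m-1) + m/(2*m-1) = 1 := by rw [← add_div, div_eq_one_iff_eq hs']; ring
  obtain ⟨hle, hlt⟩ := amgm2 ((m-1)/(2*m-1)) (m/(2*m-1))
    (Real.log u * (2*m-1)) (Real.log v * (2*m-1)) h1 h2 hw
  have hid : (m-1)/(2*m-1) * Real.exp (Real.log u * (2*m-1))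
      = Real.exp (Real.log u * (2*m-1)) - m/(2*m-1) * Real.exp (Real.log u * (2*m-1)) := by
    linear_combination Real.exp (Real.log u * (2*m-1)) * hw
  constructor
  · rw [et, eu, ev]; linarith
  · intro hne
    have := hlt (log_ne m u v hu hv hs' hne)
    rw [et, eu, ev]; linarith

lemma termB (hm0 : 0 < m) (hm1 : m < 1) (hs' : 2*m - 1 ≠ 0) (hu : 0 < u) (hv : 0 < v) :
    m/(2*m-1) * v ^ (2*m-1) - m/(2*m-1) * u ^ (2*m-1) ≤ u ^ (m-1) * (v ^ m - u ^ m) ∧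
    (u ≠ v → m/(2*m-1) * v ^ (2*m-1) - m/(2*m-1) * u ^ (2*m-1) < u ^ (m-1) * (v ^ m - u ^ m)) := by
  obtain ⟨eu, ev, et⟩ := exp_facts m u v hu hv hs'
  have hw : (m-1)/(2*m-1) + m/(2*m-1) = 1 := by rw [← add_div, div_eq_one_iff_eq hs']; ring
  have hrev : ((m-1)/(2*m-1)) * Real.exp (Real.log u * (2*m-1)) + (m/(2*m-1)) * Real.exp (Real.log v * (2*m-1))
        ≤ Real.exp ((m-1)/(2*m-1) * (Real.log u * (2*m-1)) + m/(2*m-1) * (Real.log v * (2*m-1))) ∧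
      (Real.log u * (2*m-1) ≠ Real.log v * (2*m-1) →
        ((m-1)/(2*m-1)) * Real.exp (Real.log u * (2*m-1)) + (m/(2*m-1)) * Real.exp (Real.log v * (2*m-1))
        < Real.exp ((m-1)/(2*m-1) * (Real.log u * (2*m-1)) + m/(2*m-1) * (Real.log v * (2*m-1)))) := by
    rcases lt_or_gt_of_ne hs' with hneg | hpos
    · have h2 : m/(2*m-1) < 0 := div_neg_of_pos_of_neg hm0 hneg
      obtain ⟨h₁, h₂⟩ := ramgm2 (m/(2*m-1)) ((m-1)/(2*m-1))
        (Real.log v * (2*m-1)) (Real.log u * (2*m-1)) h2 (by linarith)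
      constructor
      · rw [show (m-1)/(2*m-1) * (Real.log u * (2*m-1)) + m/(2*m-1) * (Real.log v * (2*m-1))
            = m/(2*m-1) * (Real.log v * (2*m-1)) + (m-1)/(2*m-1) * (Real.log u * (2*m-1)) by ring]
        linarith
      · intro hne
        have := h₂ (Ne.symm hne)
        rw [show (m-1)/(2*m-1) * (Real.log u * (2*m-1)) + m/(2*m-1) * (Real.log v * (2*m-1))
            = m/(2*m-1) * (Real.log v * (2*m-1)) + (m-1)/(2*m-1) * (Real.log u * (2*m-1)) by ring]
        linarith
    · have h1 : (m-1)/(2*m-1) < 0 := div_neg_of_neg_of_pos (by linarith) hpos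
      exact ramgm2 _ _ _ _ h1 hw
  obtain ⟨hle, hlt⟩ := hrev
  have hid : (m-1)/(2*m-1) * Real.exp (Real.log u * (2*m-1))
      = Real.exp (Real.log u * (2*m-1)) - m/(2*m-1) * Real.exp (Real.log u * (2*m-1)) := by
    linear_combination Real.exp (Real.log u * (2*m-1)) * hw
  constructor
  · rw [et, eu, ev]; linarith
  · intro hne
    have := hlt (log_ne m u v hu hv hs' hne)
    rw [et, eu, ev]; linarith

lemma termD (hm : 2*m - 1 = 0) (hu : 0 < u) (hv : 0 < v) :
    m * Real.log v - m * Real.log u ≤ u ^ (m-1) * (v ^ m - u ^ m) ∧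
    (u ≠ v → m * Real.log v - m * Real.log u < u ^ (m-1) * (v ^ m - u ^ m)) := by
  have hm' : m = 1/2 := by linarith
  have et : u ^ (m-1) * (v ^ m - u ^ m)
      = Real.exp (Real.log u * (m-1) + Real.log v * m) - 1 := by
    rw [Real.exp_add, ← Real.rpow_def_of_pos hu, ← Real.rpow_def_of_pos hv, mul_sub,
      ← Real.rpow_add hu]
    have : m - 1 + m = 0 := by linarith
    rw [this, Real.rpow_zero]
  have harg : Real.log u * (m-1) + Real.log v * m = m * Real.log v - m * Real.log u := by
    have : m - 1 = -m := by linarith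
    rw [this]; ring
  constructor
  · have h := Real.add_one_le_exp (Real.log u * (m-1) + Real.log v * m)
    rw [harg] at h
    rw [et, harg]
    linarith
  · intro hne
    have hz : Real.log u * (m-1) + Real.log v * m ≠ 0 := by
      rw [harg]
      intro h
      have hm0 : m ≠ 0 := by rw [hm']; norm_num
      have h2 : m * (Real.log v - Real.log u) = 0 := by linarith
      have : Real.log v = Real.log u := by
        rcases mul_eq_zero.mp h2 with h' | h'
        · exact absurd h' hm0
        · linarith [sub_eq_zero.mp h']
      exact hne (by rw [← Real.exp_log hu, ← this, Real.exp_log hv])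
    have h := Real.add_one_lt_exp hz
    rw [harg] at h
    rw [et, harg]
    linarith
end Term


open Fin.NatCast in
lemma all_eq_of_succ {N : ℕ} [NeZero N] (y : Fin N → ℝ) (h : ∀ i, y i = y (i+1)) :
    ∀ i j, y i = y j := by
  have key : ∀ (k : ℕ) (i : Fin N), y i = y (i + (k : Fin N)) := by
    intro k
    induction k with
    | zero => simp
    | succ n ih =>
      intro i
      have e : ((n+1 : ℕ) : Fin N) = (n : Fin N) + 1 := by push_cast; ring
      rw [e, ← add_assoc, ← h (i + (n : Fin N))]
      exact ih i
  intro i j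
  have := key ((j - i : Fin N)).val i
  rwa [Fin.cast_val_eq_self, show i + (j - i) = j from add_sub_cancel i j] at this

lemma cyclic_nonneg {N : ℕ} [NeZero N] (y : Fin N → ℝ) (t g : Fin N → ℝ)
    (hle : ∀ i, g (i+1) - g i ≤ t i)
    (hstrict : ∀ i, y i ≠ y (i+1) → g (i+1) - g i < t i)
    (ht0 : ∀ i, y i = y (i+1) → t i = 0) :
    0 ≤ ∑ i, t i ∧ ((∑ i, t i) = 0 ↔ ∀ i j, y i = y j) := by
  have hshift : ∑ i : Fin N, g (i + 1) = ∑ i : Fin N, g i :=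
    Fintype.sum_equiv (Equiv.addRight 1) _ _ (fun i => rfl)
  have hg : ∑ i : Fin N, (g (i+1) - g i) = 0 := by
    rw [Finset.sum_sub_distrib, hshift, sub_self]
  have h1 : 0 ≤ ∑ i, t i := by
    rw [← hg]
    exact Finset.sum_le_sum (fun i _ => hle i)
  refine ⟨h1, ?_, ?_⟩
  · intro h0
    have hsucc : ∀ i, y i = y (i+1) := by
      intro i
      by_contra hne
      have := Finset.sum_lt_sum (fun j (_ : j ∈ Finset.univ) => hle j)
        ⟨i, Finset.mem_univ i, hstrict i hne⟩
      rw [hg, h0] at this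
      exact lt_irrefl _ this
    exact all_eq_of_succ y hsucc
  · intro h
    exact Finset.sum_eq_zero (fun i _ => ht0 i (h i (i+1)))


theorem stmt_5 (N : ℕ) [NeZero N] (L : ℝ) (hL : 0 < L)
    (y : Fin N → ℝ) (hy : ∀ i, 0 < y i) (hsum : ∑ i, y i = L) (m : ℝ) :
    (1 < m →
      m * ∑ i, y i ^ (m - 1) * (y (i + 1) ^ m - y i ^ m) ≤ 0 ∧
      ((m * ∑ i, y i ^ (m - 1) * (y (i + 1) ^ m - y i ^ m) = 0) ↔ ∀ i j, y i = y j)) ∧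
    (0 < m → m < 1 →
      0 ≤ m * ∑ i, y i ^ (m - 1) * (y (i + 1) ^ m - y i ^ m) ∧
      ((m * ∑ i, y i ^ (m - 1) * (y (i + 1) ^ m - y i ^ m) = 0) ↔ ∀ i j, y i = y j)) := by
  constructor
  · -- m > 1
    intro hm
    have hm0 : (0:ℝ) < m := by linarith
    obtain ⟨hnn, hiff⟩ := cyclic_nonneg y
      (fun i => -(y i ^ (m-1) * (y (i+1) ^ m - y i ^ m)))
      (fun i => -(m/(2*m-1) * (y i) ^ (2*m-1)))
      (fun i => by
        have h := (termA m (y i) (y (i+1)) hm (hy i) (hy (i+1))).1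
        linarith)
      (fun i hne => by
        have h := (termA m (y i) (y (i+1)) hm (hy i) (hy (i+1))).2 hne
        linarith)
      (fun i h => by rw [h]; ring)
    rw [Finset.sum_neg_distrib] at hnn hiff
    have hS : (∑ i, y i ^ (m-1) * (y (i+1) ^ m - y i ^ m)) ≤ 0 := by linarith
    constructor
    · nlinarith [mul_nonneg hm0.le (neg_nonneg.mpr hS)]
    · rw [mul_eq_zero]
      constructor
      · rintro (h | h)
        · exact absurd h (ne_of_gt hm0)
        · exact hiff.mp (by rw [h, neg_zero])
      · intro h
        right
        have h2 := hiff.mpr h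
        linarith [neg_eq_zero.mp h2]
  · -- 0 < m < 1
    intro hm0 hm1
    by_cases hs : 2*m - 1 = 0
    · obtain ⟨hnn, hiff⟩ := cyclic_nonneg y
        (fun i => y i ^ (m-1) * (y (i+1) ^ m - y i ^ m))
        (fun i => m * Real.log (y i))
        (fun i => (termD m (y i) (y (i+1)) hs (hy i) (hy (i+1))).1)
        (fun i hne => (termD m (y i) (y (i+1)) hs (hy i) (hy (i+1))).2 hne)
        (fun i h => by rw [h]; ring)
      refine ⟨mul_nonneg hm0.le hnn, ?_⟩
      rw [mul_eq_zero]
      constructor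
      · rintro (h | h)
        · exact absurd h (ne_of_gt hm0)
        · exact hiff.mp h
      · intro h
        exact Or.inr (hiff.mpr h)
    · obtain ⟨hnn, hiff⟩ := cyclic_nonneg y
        (fun i => y i ^ (m-1) * (y (i+1) ^ m - y i ^ m))
        (fun i => m/(2*m-1) * (y i) ^ (2*m-1))
        (fun i => (termB m (y i) (y (i+1)) hm0 hm1 hs (hy i) (hy (i+1))).1)
        (fun i hne => (termB m (y i) (y (i+1)) hm0 hm1 hs (hy i) (hy (i+1))).2 hne)
        (fun i h => by rw [h]; ring)
      refine ⟨mul_nonneg hm0.le hnn, ?_⟩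
      rw [mul_eq_zero]
      constructor
      · rintro (h | h)
        · exact absurd h (ne_of_gt hm0)
        · exact hiff.mp h
      · intro h
        exact Or.inr (hiff.mpr h)
end

section
/- For y ∈ ℝ_{++}^N with ∑ y_i = L, let f(y,m) = m ∑_{i=1}^N y_i^{m-1}(y_{i+1}^m − y_i^m) (cyclic indices). Then ∂f/∂m evaluated at m = 1 equals −L · D(y/L ‖ P⁻(y/L)), where D(p‖q) = ∑ p_i log(p_i/q_i) is the KL divergence and P⁻ is the cyclic shift sending (z_1,…,z_N) to (z_N, z_1, …, z_{N−1}). In particular ∂f/∂m|_{m=1} ≤ 0, with equality iff all y_i equal L/N. -/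
open Finset

theorem stmt_9 (N : ℕ) [NeZero N] (L : ℝ) (hL : 0 < L)
    (y : Fin N → ℝ) (hy : ∀ i, 0 < y i) (hsum : ∑ i, y i = L) :
    HasDerivAt
      (fun m : ℝ => m * ∑ i, y i ^ (m - 1) * (y (i + 1) ^ m - y i ^ m))
      (-(L * ∑ i, (y i / L) * Real.log ((y i / L) / (y (i - 1) / L)))) 1 ∧
    -(L * ∑ i, (y i / L) * Real.log ((y i / L) / (y (i - 1) / L))) ≤ 0 ∧
    ((-(L * ∑ i, (y i / L) * Real.log ((y i / L) / (y (i - 1) / L))) = 0) ↔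
      ∀ i, y i = L / N) := by
  have hN : (N : ℝ) ≠ 0 := Nat.cast_ne_zero.mpr (NeZero.ne N)
  have hL0 : L ≠ 0 := hL.ne'
  set K : ℝ := ∑ i, y i * Real.log (y i / y (i - 1)) with hK
  -- rewrite the stated value as -K
  have hval : -(L * ∑ i, (y i / L) * Real.log ((y i / L) / (y (i - 1) / L))) = -K := by
    rw [hK, Finset.mul_sum]
    congr 1
    refine Finset.sum_congr rfl fun i _ => ?_
    have h1 : (y i / L) / (y (i - 1) / L) = y i / y (i - 1) := by
      field_simp
    rw [h1, ← mul_assoc, mul_div_cancel₀ _ hL0]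
  rw [hval]
  -- shift identity
  have hshift : ∀ F : Fin N → ℝ, ∑ i, F (i + 1) = ∑ i, F i := fun F =>
    Fintype.sum_equiv (Equiv.addRight 1) _ _ (fun i => rfl)
  have hshift' : ∀ F : Fin N → ℝ, ∑ i, F (i - 1) = ∑ i, F i := fun F =>
    Fintype.sum_equiv (Equiv.subRight 1) _ _ (fun i => rfl)
  -- the derivative
  have hg : HasDerivAt (fun m : ℝ => ∑ i, y i ^ (m - 1) * (y (i + 1) ^ m - y i ^ m))
      (∑ i, (Real.log (y i) * (y (i + 1) - y i) +
        (y (i + 1) * Real.log (y (i + 1)) - y i * Real.log (y i)))) 1 := by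
    apply HasDerivAt.fun_sum
    intro i _
    have hi := hy i
    have hi1 := hy (i + 1)
    have d1 : HasDerivAt (fun m : ℝ => y i ^ (m - 1)) (Real.log (y i)) 1 := by
      have h2 : HasDerivAt (fun m : ℝ => m - 1) 1 1 := (hasDerivAt_id 1).sub_const 1
      have := (hasDerivAt_const (1:ℝ) (y i)).rpow h2 hi
      simpa [Real.rpow_zero] using this
    have d2 : HasDerivAt (fun m : ℝ => y (i + 1) ^ m) (y (i + 1) * Real.log (y (i + 1))) 1 := by
      simpa [Real.rpow_one] using (Real.hasStrictDerivAt_const_rpow hi1 1).hasDerivAt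
    have d3 : HasDerivAt (fun m : ℝ => y i ^ m) (y i * Real.log (y i)) 1 := by
      simpa [Real.rpow_one] using (Real.hasStrictDerivAt_const_rpow hi 1).hasDerivAt
    have := d1.fun_mul (d2.fun_sub d3)
    simpa [Real.rpow_one, Real.rpow_zero] using this
  -- value of inner sum at 1
  have hg1 : ∑ i, y i ^ ((1:ℝ) - 1) * (y (i + 1) ^ (1:ℝ) - y i ^ (1:ℝ)) = 0 := by
    have : ∀ i : Fin N, y i ^ ((1:ℝ) - 1) * (y (i + 1) ^ (1:ℝ) - y i ^ (1:ℝ))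
        = y (i + 1) - y i := by
      intro i
      rw [sub_self, Real.rpow_zero, Real.rpow_one, Real.rpow_one, one_mul]
    rw [Finset.sum_congr rfl fun i _ => this i, Finset.sum_sub_distrib, hshift y, sub_self]
  -- derivative value equals -K
  have hS : ∑ i, (Real.log (y i) * (y (i + 1) - y i) +
      (y (i + 1) * Real.log (y (i + 1)) - y i * Real.log (y i))) = -K := by
    have h1 := hshift (fun j => y j * Real.log (y (j - 1)))
    have h2 := hshift (fun j => y j * Real.log (y j))
    simp only [add_sub_cancel_right] at h1
    have hexp : ∀ i : Fin N, Real.log (y i) * (y (i + 1) - y i) +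
        (y (i + 1) * Real.log (y (i + 1)) - y i * Real.log (y i))
        = (y (i + 1) * Real.log (y i) - y i * Real.log (y i)) +
          (y (i + 1) * Real.log (y (i + 1)) - y i * Real.log (y i)) := fun i => by ring
    rw [Finset.sum_congr rfl fun i _ => hexp i, Finset.sum_add_distrib,
      Finset.sum_sub_distrib, Finset.sum_sub_distrib, h1, h2]
    have hKexp : K = ∑ i, (y i * Real.log (y i) - y i * Real.log (y (i - 1))) := by
      rw [hK]
      refine Finset.sum_congr rfl fun i _ => ?_
      rw [Real.log_div (hy i).ne' (hy (i - 1)).ne', mul_sub]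
    rw [hKexp, Finset.sum_sub_distrib]
    ring
  have hderiv : HasDerivAt
      (fun m : ℝ => m * ∑ i, y i ^ (m - 1) * (y (i + 1) ^ m - y i ^ m)) (-K) 1 := by
    have := (hasDerivAt_id (1 : ℝ)).fun_mul hg
    simp only [id, one_mul] at this
    rw [hg1, hS] at this
    simpa using this
  -- Gibbs inequality terms
  have hterm : ∀ i : Fin N, 0 ≤ y i * Real.log (y i / y (i - 1)) - (y i - y (i - 1)) ∧
      (y i * Real.log (y i / y (i - 1)) - (y i - y (i - 1)) = 0 → y (i - 1) = y i) := by
    intro i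
    have hyi := hy i
    have hyj := hy (i - 1)
    have h0 : 0 < y (i - 1) / y i := div_pos hyj hyi
    have hlog : Real.log (y i / y (i - 1)) = -Real.log (y (i - 1) / y i) := by
      rw [← Real.log_inv, inv_div]
    have hmul : y i * (y (i - 1) / y i) = y (i - 1) := by field_simp
    by_cases h : y (i - 1) = y i
    · have h1 : y i / y (i - 1) = 1 := by rw [h]; field_simp
      constructor
      · rw [h1, Real.log_one, h]; simp
      · exact fun _ => h
    · have hne : y (i - 1) / y i ≠ 1 := fun hc => h (by field_simp at hc; linarith)
      have hlt := Real.log_lt_sub_one_of_pos h0 hne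
      have h2 : y i * Real.log (y (i - 1) / y i) < y (i - 1) - y i := by
        have := mul_lt_mul_of_pos_left hlt hyi
        rwa [mul_sub, hmul, mul_one] at this
      have hpos : 0 < y i * Real.log (y i / y (i - 1)) - (y i - y (i - 1)) := by
        rw [hlog]; nlinarith
      exact ⟨hpos.le, fun hc => absurd hc hpos.ne'⟩
  have hKg : K = ∑ i, (y i * Real.log (y i / y (i - 1)) - (y i - y (i - 1))) := by
    rw [Finset.sum_sub_distrib, Finset.sum_sub_distrib, hshift' y, sub_self, sub_zero, hK]
  have hKnonneg : 0 ≤ K := by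
    rw [hKg]
    exact Finset.sum_nonneg fun i _ => (hterm i).1
  refine ⟨hderiv, by linarith, ?_⟩
  rw [neg_eq_zero]
  constructor
  · intro hK0
    -- each term is zero, so all y's are equal
    have hall : ∀ i : Fin N, y (i - 1) = y i := by
      have := (Finset.sum_eq_zero_iff_of_nonneg (fun i _ => (hterm i).1)).mp
        (by rw [← hKg]; exact hK0)
      exact fun i => (hterm i).2 (this i (Finset.mem_univ i))
    have hsucc : ∀ j : Fin N, y (j + 1) = y j := by
      intro j
      have := hall (j + 1)
      rw [add_sub_cancel_right] at this
      exact this.symm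
    open Fin.NatCast in
    have hnat : ∀ k : ℕ, y (k : Fin N) = y 0 := by
      intro k
      induction k with
      | zero => simp
      | succ n ih => rw [Nat.cast_succ, hsucc, ih]
    open Fin.NatCast in
    have hconst : ∀ i : Fin N, y i = y 0 := fun i => by
      have := hnat (i : ℕ)
      rwa [Fin.cast_val_eq_self] at this
    have hsum0 : (N : ℝ) * y 0 = L := by
      rw [← hsum, Finset.sum_congr rfl fun i _ => hconst i]
      simp [Finset.card_univ, mul_comm]
    intro i
    rw [hconst i]
    field_simp at hsum0 ⊢
    linarith
  · intro hLN
    rw [hK]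
    refine Finset.sum_eq_zero fun i _ => ?_
    rw [hLN i, hLN (i - 1), div_self (by positivity), Real.log_one, mul_zero]
end

section
/- For all y ∈ ℝ_{++}^N with ∑ y_i = L and 0 < L < e^{−2}, the expression ∑_{i=1}^N (log y_i)^2 (y_{i+1} − y_i) + 2 ∑_{i=1}^N (log y_i)(y_{i+1} log y_{i+1} + y_{i+1} − y_i log y_i − y_i) (cyclic indices) is nonnegative, with equality iff all y_i are equal. -/
open Finset


noncomputable def phiF (B A : ℝ) : ℝ := Real.exp A * ((B - A) * (B + 3*A) + 2*A + 2*B - 2)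

lemma phiF_deriv (B A : ℝ) :
    HasDerivAt (phiF B) (Real.exp A * ((B - A) * (B + 3*A + 4))) A := by
  have hx : HasDerivAt (fun X : ℝ => X) 1 A := hasDerivAt_id A
  have h2 : HasDerivAt (fun X : ℝ => B - X) (-1) A := by
    simpa using hx.const_sub B
  have h3 : HasDerivAt (fun X : ℝ => B + 3*X) 3 A := by
    exact ((hx.const_mul 3).const_add B).congr_deriv (by ring)
  have h4 : HasDerivAt (fun X : ℝ => (B - X) * (B + 3*X) + 2*X + 2*B - 2)
      ((-1) * (B + 3*A) + (B - A) * 3 + 2) A := by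
    have h5 := ((h2.mul h3).add (hx.const_mul 2)).add_const (2*B - 2)
    have he : (fun X : ℝ => (B - X) * (B + 3*X) + 2*X + 2*B - 2)
        = fun X : ℝ => ((B - X) * (B + 3*X) + 2*X) + (2*B - 2) := by
      funext X; ring
    rw [he]
    exact h5.congr_deriv (by ring)
  have := (Real.hasDerivAt_exp A).mul h4
  unfold phiF
  exact this.congr_deriv (by ring)

lemma phiF_cont (B : ℝ) : Continuous (phiF B) := by
  unfold phiF; fun_prop

lemma phiF_min {B A : ℝ} (hB : B ≤ -2) (hA : A ≤ -2) (hne : A ≠ B) :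
    phiF B B < phiF B A := by
  rcases lt_or_gt_of_ne hne with hlt | hgt
  · have hanti : StrictAntiOn (phiF B) (Set.Iic B) := by
      apply strictAntiOn_of_deriv_neg (convex_Iic B) (phiF_cont B).continuousOn
      intro x hx
      rw [interior_Iic] at hx
      rw [(phiF_deriv B x).deriv]
      have h1 : (0:ℝ) < B - x := by simp at hx; linarith
      have h2 : B + 3*x + 4 < 0 := by simp at hx; linarith
      exact mul_neg_of_pos_of_neg (Real.exp_pos x) (mul_neg_of_pos_of_neg h1 h2)
    exact hanti (le_of_lt hlt) (le_refl B) hlt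
  · have hmono : StrictMonoOn (phiF B) (Set.Icc B (-2)) := by
      apply strictMonoOn_of_deriv_pos (convex_Icc B (-2)) (phiF_cont B).continuousOn
      intro x hx
      rw [interior_Icc] at hx
      obtain ⟨hx1, hx2⟩ := hx
      rw [(phiF_deriv B x).deriv]
      have h1 : B - x < 0 := by linarith
      have h2 : B + 3*x + 4 < 0 := by linarith
      exact mul_pos (Real.exp_pos x) (mul_pos_of_neg_of_neg h1 h2)
    exact hmono ⟨le_refl B, hB⟩ ⟨le_of_lt hgt, hA⟩ hgt

noncomputable def ThF (t : ℝ) : ℝ := 3*t*(Real.log t)^2 - 2*t*Real.log t + 2*t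

lemma edge_key {a b : ℝ} (ha : 0 < a) (haE : a < Real.exp (-2))
    (hb : 0 < b) (hbE : b < Real.exp (-2)) :
    ThF a - ThF b ≤
      (Real.log b)^2 * (a - b) + 2 * (Real.log b * (a * Real.log a + a - b * Real.log b - b))
    ∧ (a ≠ b → ThF a - ThF b <
      (Real.log b)^2 * (a - b) + 2 * (Real.log b * (a * Real.log a + a - b * Real.log b - b))) := by
  have hA : Real.log a ≤ -2 := by
    have := Real.log_lt_log ha haE
    rw [Real.log_exp] at this; linarith
  have hB : Real.log b ≤ -2 := by
    have := Real.log_lt_log hb hbE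
    rw [Real.log_exp] at this; linarith
  set A := Real.log a with hAdef
  set B := Real.log b with hBdef
  have hea : Real.exp A = a := Real.exp_log ha
  have heb : Real.exp B = b := Real.exp_log hb
  have key : ((B:ℝ)^2 * (a - b) + 2 * (B * (a * A + a - b * B - b))) - (ThF a - ThF b)
      = phiF B A - phiF B B := by
    unfold ThF phiF
    rw [← hea, ← heb, Real.log_exp, Real.log_exp]
    ring
  constructor
  · by_cases hab : a = b
    · subst hab; simp
      have h0 : a * A + a - a * B - a = 0 := by rw [hAdef, hBdef]; ring
      rw [h0, mul_zero]
    · have hne : A ≠ B := fun h => hab (by rw [← hea, ← heb, h])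
      have := phiF_min hB hA hne
      linarith
  · intro hab
    have hne : A ≠ B := fun h => hab (by rw [← hea, ← heb, h])
    have := phiF_min hB hA hne
    linarith

theorem stmt_10 (N : ℕ) [NeZero N] (L : ℝ) (hL0 : 0 < L) (hL : L < Real.exp (-2))
    (y : Fin N → ℝ) (hy : ∀ i, 0 < y i) (hsum : ∑ i, y i = L) :
    0 ≤ (∑ i, (Real.log (y i)) ^ 2 * (y (i + 1) - y i)) +
        2 * ∑ i, Real.log (y i) *
          (y (i + 1) * Real.log (y (i + 1)) + y (i + 1) - y i * Real.log (y i) - y i) ∧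
    (((∑ i, (Real.log (y i)) ^ 2 * (y (i + 1) - y i)) +
        2 * ∑ i, Real.log (y i) *
          (y (i + 1) * Real.log (y (i + 1)) + y (i + 1) - y i * Real.log (y i) - y i) = 0) ↔
      ∀ i j, y i = y j) := by
  have hyE : ∀ i, y i < Real.exp (-2) := by
    intro i
    have h1 : y i ≤ L := by
      rw [← hsum]
      exact Finset.single_le_sum (fun j _ => (hy j).le) (mem_univ i)
    linarith
  -- rewrite expression as a single sum
  set term : Fin N → ℝ := fun i =>
    (Real.log (y i))^2 * (y (i+1) - y i) +
      2 * (Real.log (y i) * (y (i+1) * Real.log (y (i+1)) + y (i+1) - y i * Real.log (y i) - y i))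
    with hterm
  have hexpr : (∑ i, (Real.log (y i)) ^ 2 * (y (i + 1) - y i)) +
        2 * ∑ i, Real.log (y i) *
          (y (i + 1) * Real.log (y (i + 1)) + y (i + 1) - y i * Real.log (y i) - y i)
      = ∑ i, term i := by
    rw [Finset.mul_sum, ← Finset.sum_add_distrib]
  have hle : ∀ i : Fin N, ThF (y (i+1)) - ThF (y i) ≤ term i :=
    fun i => (edge_key (hy (i+1)) (hyE (i+1)) (hy i) (hyE i)).1
  have hlt : ∀ i : Fin N, y (i+1) ≠ y i → ThF (y (i+1)) - ThF (y i) < term i :=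
    fun i h => (edge_key (hy (i+1)) (hyE (i+1)) (hy i) (hyE i)).2 h
  have htel : ∑ i : Fin N, (ThF (y (i+1)) - ThF (y i)) = 0 := by
    rw [Finset.sum_sub_distrib]
    have : ∑ i : Fin N, ThF (y (i+1)) = ∑ i : Fin N, ThF (y i) :=
      Fintype.sum_equiv (Equiv.addRight (1 : Fin N)) _ _ (fun i => rfl)
    rw [this, sub_self]
  have hnonneg : 0 ≤ ∑ i, term i := by
    rw [← htel]
    exact Finset.sum_le_sum (fun i _ => hle i)
  rw [hexpr]
  refine ⟨hnonneg, ?_, ?_⟩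
  · intro h0
    have hcons : ∀ i : Fin N, y (i+1) = y i := by
      by_contra hc
      push_neg at hc
      obtain ⟨i0, hi0⟩ := hc
      have : ∑ i : Fin N, (ThF (y (i+1)) - ThF (y i)) < ∑ i, term i :=
        Finset.sum_lt_sum (fun i _ => hle i) ⟨i0, mem_univ i0, hlt i0 hi0⟩
      rw [htel, h0] at this
      exact lt_irrefl 0 this
    open Fin.NatCast in
    have hk : ∀ (k : ℕ) (i : Fin N), y (i + (k : Fin N)) = y i := by
      intro k
      induction k with
      | zero => intro i; simp
      | succ n ih =>
        intro i
        have hcast : ((n+1 : ℕ) : Fin N) = (n : Fin N) + 1 := by push_cast; ring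
        rw [hcast, ← add_assoc, hcons (i + (n : Fin N)), ih]
    intro i j
    have := hk (j - i).val i
    open Fin.NatCast in
    rw [Fin.cast_val_eq_self, add_sub_cancel] at this
    exact this.symm
  · intro h
    have : ∀ i ∈ (univ : Finset (Fin N)), term i = 0 := by
      intro i _
      rw [hterm]
      simp only
      rw [h (i+1) i]
      ring
    rw [Finset.sum_eq_zero this]
end

section
/- Consider the car-following system ẋ_i = (x_{i+1} − x_i)^m for i = 1,…,N−1 and ẋ_N given analogously, on ℝ_+^N with ordered coordinates and gaps at most L ≤ 1. If x¹(0) ≤ x²(0) componentwise and 0 < m_2 ≤ m_1, then the solutions satisfy X(t; x¹(0), m_1) ≤ X(t; x²(0), m_2) componentwise for all t ≥ 0 in an interval where both solutions exist. -/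
open Set

/-- Inter-vehicle gap on a circle of length `L`: the gap in front of vehicle `i`
is `x (i+1) - x i` for `i < N - 1`, and `x 0 + L - x (N-1)` for the last vehicle
(the wrap-around gap). -/
def gap {N : ℕ} [NeZero N] (L : ℝ) (x : Fin N → ℝ) (i : Fin N) : ℝ :=
  x (i + 1) - x i + (if (i : ℕ) + 1 = N then L else 0)

private lemma rpow_key {a b m₁ m₂ : ℝ} (ha0 : 0 ≤ a) (ha1 : a ≤ 1) (hab : a ≤ b)
    (hm₂ : 0 < m₂) (hm : m₂ ≤ m₁) : a ^ m₁ ≤ b ^ m₂ := by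
  have h2 : a ^ m₂ ≤ b ^ m₂ := Real.rpow_le_rpow ha0 hab hm₂.le
  refine le_trans ?_ h2
  rcases ha0.eq_or_lt with h | h
  · rw [← h, Real.zero_rpow (hm₂.trans_le hm).ne', Real.zero_rpow hm₂.ne']
  · exact Real.rpow_le_rpow_of_exponent_ge h ha1 hm

theorem stmt_17 {N : ℕ} [NeZero N] (L m₁ m₂ τ : ℝ)
    (hL0 : 0 < L) (hL : L ≤ 1) (hm₂ : 0 < m₂) (hm : m₂ ≤ m₁)
    (x₁ x₂ : ℝ → Fin N → ℝ)
    (hx₁ : ∀ t ∈ Ico (0 : ℝ) τ, ∀ i, 0 ≤ x₁ t i)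
    (hx₂ : ∀ t ∈ Ico (0 : ℝ) τ, ∀ i, 0 ≤ x₂ t i)
    (hgap₁ : ∀ t ∈ Ico (0 : ℝ) τ, ∀ i, 0 ≤ gap L (x₁ t) i ∧ gap L (x₁ t) i ≤ L)
    (hgap₂ : ∀ t ∈ Ico (0 : ℝ) τ, ∀ i, 0 ≤ gap L (x₂ t) i ∧ gap L (x₂ t) i ≤ L)
    (hode₁ : ∀ i, ∀ t ∈ Ico (0 : ℝ) τ,
      HasDerivAt (fun s => x₁ s i) (gap L (x₁ t) i ^ m₁) t)
    (hode₂ : ∀ i, ∀ t ∈ Ico (0 : ℝ) τ,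
      HasDerivAt (fun s => x₂ s i) (gap L (x₂ t) i ^ m₂) t)
    (h0 : ∀ i, x₁ 0 i ≤ x₂ 0 i) :
    ∀ t ∈ Ico (0 : ℝ) τ, ∀ i, x₁ t i ≤ x₂ t i := by
  intro t₀ ht₀ i
  obtain ⟨ht₀0, ht₀τ⟩ := ht₀
  -- it suffices to prove the ε-perturbed inequality for every ε > 0
  suffices key : ∀ ε > (0 : ℝ), ∀ j, x₁ t₀ j ≤ x₂ t₀ j + ε * (1 + t₀) by
    by_contra hcon
    push_neg at hcon
    have h1t : (0 : ℝ) < 1 + t₀ := by linarith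
    set ε := (x₁ t₀ i - x₂ t₀ i) / (2 * (1 + t₀)) with hε
    have hεpos : 0 < ε := by
      apply div_pos (by linarith) (by linarith)
    have := key ε hεpos i
    have : ε * (1 + t₀) = (x₁ t₀ i - x₂ t₀ i) / 2 := by
      rw [hε, div_mul_eq_mul_div, div_eq_div_iff (mul_pos two_pos h1t).ne' two_ne_zero]; ring
    linarith [key ε hεpos i]
  intro ε hε j
  -- the "bad" set
  set A : Set ℝ := {t | t ∈ Icc 0 t₀ ∧ ∃ k, x₂ t k + ε * (1 + t) ≤ x₁ t k} with hA
  -- continuity on Icc 0 t₀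
  have hsub : Icc (0:ℝ) t₀ ⊆ Ico (0:ℝ) τ := fun t ht => ⟨ht.1, lt_of_le_of_lt ht.2 ht₀τ⟩
  have hc : ∀ k, ContinuousOn (fun t => x₂ t k + ε * (1 + t) - x₁ t k) (Icc 0 t₀) := by
    intro k t ht
    have h1 := (hode₁ k t (hsub ht)).continuousAt
    have h2 := (hode₂ k t (hsub ht)).continuousAt
    exact ((h2.add (by fun_prop)).sub h1).continuousWithinAt
  have hA_closed : IsClosed A := by
    have : A = ⋃ k, (Icc 0 t₀ ∩ (fun t => x₂ t k + ε * (1 + t) - x₁ t k) ⁻¹' Iic 0) := by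
      ext t
      simp only [hA, mem_setOf_eq, mem_iUnion, mem_inter_iff, mem_preimage, mem_Iic]
      constructor
      · rintro ⟨ht, k, hk⟩; exact ⟨k, ht, by linarith⟩
      · rintro ⟨k, ht, hk⟩; exact ⟨ht, k, by linarith⟩
    rw [this]
    exact isClosed_iUnion_of_finite fun k =>
      (hc k).preimage_isClosed_of_isClosed isClosed_Icc isClosed_Iic
  -- suppose the bad set is nonempty and derive a contradiction
  by_contra hcon
  push_neg at hcon
  have hAne : A.Nonempty := ⟨t₀, ⟨ht₀0, le_refl _⟩, j, hcon.le⟩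
  have hAbdd : BddBelow A := ⟨0, fun t ht => ht.1.1⟩
  set t' := sInf A with ht'
  have ht'A : t' ∈ A := hA_closed.csInf_mem hAne hAbdd
  obtain ⟨⟨ht'0, ht't₀⟩, k, hk⟩ := ht'A
  have ht'Ico : t' ∈ Ico (0:ℝ) τ := hsub ⟨ht'0, ht't₀⟩
  -- t' > 0
  have ht'pos : 0 < t' := by
    rcases ht'0.eq_or_lt with h | h
    · exfalso
      have h0k := h0 k
      rw [← h] at hk
      simp only [add_zero] at hk
      nlinarith [h0 k]
    · exact h
  -- strict inequality before t'
  have hbefore : ∀ t, 0 ≤ t → t < t' → ∀ l, x₁ t l < x₂ t l + ε * (1 + t) := by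
    intro t h0t htt' l
    by_contra hc2
    push_neg at hc2
    have : t ∈ A := ⟨⟨h0t, le_trans htt'.le ht't₀⟩, l, hc2⟩
    exact absurd (csInf_le hAbdd this) (not_le.mpr htt')
  -- at t', all components satisfy ≤ (by continuity from the left)
  have hat : ∀ l, x₁ t' l ≤ x₂ t' l + ε * (1 + t') := by
    intro l
    have hcl : ContinuousAt (fun t => x₂ t l + ε * (1 + t) - x₁ t l) t' := by
      have h1 := (hode₁ l t' ht'Ico).continuousAt
      have h2 := (hode₂ l t' ht'Ico).continuousAt
      exact (h2.add (by fun_prop)).sub h1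
    have htend : Filter.Tendsto (fun t => x₂ t l + ε * (1 + t) - x₁ t l) (nhdsWithin t' (Iio t'))
        (nhds (x₂ t' l + ε * (1 + t') - x₁ t' l)) :=
      hcl.continuousWithinAt
    have hev : ∀ᶠ t in nhdsWithin t' (Iio t'),
        0 ≤ x₂ t l + ε * (1 + t) - x₁ t l := by
      filter_upwards [Ioo_mem_nhdsLT_of_mem (show t' ∈ Ioc 0 t' from ⟨ht'pos, le_refl _⟩)]
        with t ht
      have := hbefore t ht.1.le ht.2 l
      linarith
    linarith [ge_of_tendsto htend hev]
  -- the touching component k: equality at t'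
  have hkeq : x₁ t' k = x₂ t' k + ε * (1 + t') := le_antisymm (hat k) hk
  -- gap comparison at t'
  have hgaple : gap L (x₁ t') k ≤ gap L (x₂ t') k := by
    have h1 := hat (k + 1)
    simp only [gap]
    have : x₁ t' (k + 1) - x₁ t' k ≤ x₂ t' (k + 1) - x₂ t' k := by linarith
    linarith
  -- derivative of the difference at t'
  have hg₁ := hgap₁ t' ht'Ico k
  have hg₂ := hgap₂ t' ht'Ico k
  have hpow : gap L (x₁ t') k ^ m₁ ≤ gap L (x₂ t') k ^ m₂ :=
    rpow_key hg₁.1 (le_trans hg₁.2 hL) hgaple hm₂ hm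
  set D : ℝ := gap L (x₁ t') k ^ m₁ - (gap L (x₂ t') k ^ m₂ + ε) with hD
  have hDneg : D < 0 := by simp only [hD]; linarith
  have hderiv : HasDerivAt (fun t => x₁ t k - (x₂ t k + ε * (1 + t))) D t' := by
    have h1 := hode₁ k t' ht'Ico
    have h2 := hode₂ k t' ht'Ico
    have h3 : HasDerivAt (fun t : ℝ => ε * (1 + t)) ε t' := by
      have := ((hasDerivAt_const t' (1:ℝ)).add (hasDerivAt_id t')).const_mul ε
      simpa using this
    exact h1.sub (h2.add h3)
  -- slope argument: since D < 0 and the function vanishes at t', it was positive before t'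
  have hslope := hasDerivAt_iff_tendsto_slope.mp hderiv
  have hslope' : Filter.Tendsto (slope (fun t => x₁ t k - (x₂ t k + ε * (1 + t))) t')
      (nhdsWithin t' (Iio t')) (nhds D) :=
    hslope.mono_left (nhdsWithin_mono _ (fun t ht => ne_of_lt ht))
  have hev1 : ∀ᶠ t in nhdsWithin t' (Iio t'),
      slope (fun t => x₁ t k - (x₂ t k + ε * (1 + t))) t' t < 0 :=
    hslope' (Iio_mem_nhds hDneg)
  have hev2 : ∀ᶠ t in nhdsWithin t' (Iio t'), t ∈ Ioo 0 t' :=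
    Ioo_mem_nhdsLT_of_mem ⟨ht'pos, le_refl _⟩
  obtain ⟨t, hst, ht⟩ := (hev1.and hev2).exists
  have hval : x₁ t k - (x₂ t k + ε * (1 + t)) < 0 := by
    have := hbefore t ht.1.le ht.2 k
    linarith
  have hzero : x₁ t' k - (x₂ t' k + ε * (1 + t')) = 0 := by linarith
  rw [slope_def_field, hzero, sub_zero, div_neg_iff] at hst
  rcases hst with ⟨hp, hq⟩ | ⟨hp, hq⟩
  · linarith
  · linarith [ht.2]
end
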